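/- Let (P, ≤, ', ⊥, ⊤) be an orthoposet, i.e., a bounded poset with an antitone involution ' satisfying U(x,x') = {⊤} and L(x,x') = {⊥} for all x. For A ⊆ P set A* := L(A') where A' := {x' | x ∈ A}. Then for every subset A ⊆ P with L(U(A)) = A: L(U(A ∪ A*)) = P and A ∩ A* = {⊥}. In other words, in the Dedekind–MacNeille completion D(P) (closed subsets ordered by inclusion, with join A ∨ B = L(U(A ∪ B)) and meet A ∧ B = A ∩ B), A ∨ A* is the top element P and A ∧ A* is the bottom element {⊥}. -/
import Mathlib


/-- Let `P` be an orthoposet with antitone involution and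
complementation `n`, and set `A* := L(n '' A)`. Then for every closed subset
`A` (i.e. `L(U(A)) = A`): `L(U(A ∪ A*)) = P` and `A ∩ A* = {⊥}`, i.e. in the
Dedekind–MacNeille completion `A ∨ A* = ⊤` and `A ∧ A* = ⊥`. -/
theorem stmt_14 {P : Type*} [PartialOrder P] [BoundedOrder P] (n : P → P)
    (hanti : ∀ x y : P, x ≤ y → n y ≤ n x) (hinv : ∀ x : P, n (n x) = x)
    (hU : ∀ x : P, upperBounds {x, n x} = {⊤})
    (hL : ∀ x : P, lowerBounds {x, n x} = {⊥}) :
    ∀ A : Set P, lowerBounds (upperBounds A) = A →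
      lowerBounds (upperBounds (A ∪ lowerBounds (n '' A))) = Set.univ ∧
      A ∩ lowerBounds (n '' A) = {⊥} := by
  intro A hA
  constructor
  · have hUB : upperBounds (A ∪ lowerBounds (n '' A)) = {⊤} := by
      apply Set.eq_singleton_iff_unique_mem.mpr
      constructor
      · intro x _; exact le_top
      · intro u hu
        have hu1 : u ∈ upperBounds A := fun a ha => hu (Or.inl ha)
        have hnu : n u ∈ lowerBounds (n '' A) := by
          rintro y ⟨a, ha, rfl⟩
          exact hanti _ _ (hu1 ha)
        have hle : n u ≤ u := hu (Or.inr hnu)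
        have : u ∈ upperBounds ({u, n u} : Set P) := by
          intro z hz
          rcases hz with rfl | rfl
          · exact le_rfl
          · exact hle
        rw [hU u] at this
        exact this
    rw [hUB]
    ext x
    simp only [Set.mem_univ, iff_true]
    intro y hy
    rw [Set.mem_singleton_iff] at hy
    subst hy
    exact le_top
  · ext x
    simp only [Set.mem_inter_iff, Set.mem_singleton_iff]
    constructor
    · rintro ⟨hxA, hxs⟩
      have h1 : x ≤ n x := hxs ⟨x, hxA, rfl⟩
      have : x ∈ lowerBounds ({x, n x} : Set P) := by
        intro z hz
        rcases hz with rfl | rfl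
        · exact le_rfl
        · exact h1
      rw [hL x] at this
      exact this
    · rintro rfl
      refine ⟨?_, ?_⟩
      · rw [← hA]; intro y _; exact bot_le
      · intro y _; exact bot_le
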